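/- arXiv:1409.3447 — 4 statements merged into one kernel-verified Lean document; each statement's English description precedes it below -/
import Mathlib

section
/- For any h₁,…,hₙ in a real inner product space H and any λ₁,…,λₙ ∈ ℝ, the inequality ∑_{j,k} λ_j λ_k (e^{⟨h_j,h_k⟩} − 1) ≤ ∑_{j,k} λ_j λ_k e^{⟨h_j,h_k⟩} ⟨h_j,h_k⟩ holds; equivalently, the matrix with entries b_{jk} = 1 − e^{⟨h_j,h_k⟩} + e^{⟨h_j,h_k⟩}⟨h_j,h_k⟩ is positive semi-definite. -/
open Real RealInnerProductSpace Nat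

open Finset in
lemma rep_quadform_nonneg {ι : Type*} [Fintype ι] (n m : ℕ)
    (a : Fin n → ι → ℝ) (c : Fin n → ℝ) :
    0 ≤ ∑ j, ∑ k, c j * c k * (∑ i, a j i * a k i) ^ m := by
  have e1 : ∀ j k, c j * c k * (∑ i, a j i * a k i) ^ m
      = ∑ p : Fin m → ι, (c j * ∏ t, a j (p t)) * (c k * ∏ t, a k (p t)) := by
    intro j k
    rw [Fintype.sum_pow, Finset.mul_sum]
    exact Finset.sum_congr rfl fun p _ => by rw [Finset.prod_mul_distrib]; ring
  have key : ∑ j, ∑ k, c j * c k * (∑ i, a j i * a k i) ^ m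
      = ∑ p : Fin m → ι, (∑ j, c j * ∏ t, a j (p t)) ^ 2 := by
    simp_rw [e1]
    calc (∑ j, ∑ k, ∑ p : Fin m → ι,
        (c j * ∏ t, a j (p t)) * (c k * ∏ t, a k (p t)))
        = ∑ j, ∑ p : Fin m → ι, ∑ k,
          (c j * ∏ t, a j (p t)) * (c k * ∏ t, a k (p t)) :=
        Finset.sum_congr rfl fun j _ => Finset.sum_comm
      _ = ∑ p : Fin m → ι, ∑ j, ∑ k,
          (c j * ∏ t, a j (p t)) * (c k * ∏ t, a k (p t)) := Finset.sum_comm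
      _ = ∑ p : Fin m → ι, (∑ j, c j * ∏ t, a j (p t)) ^ 2 :=
        Finset.sum_congr rfl fun p _ => by rw [sq, Finset.sum_mul_sum]
  rw [key]
  exact Finset.sum_nonneg fun p _ => sq_nonneg _

lemma gram_pow_quadform_nonneg {H : Type*} [NormedAddCommGroup H]
    [InnerProductSpace ℝ H] (n m : ℕ) (h : Fin n → H) (c : Fin n → ℝ) :
    0 ≤ ∑ j, ∑ k, c j * c k * (⟪h j, h k⟫ : ℝ) ^ m := by
  let K := Submodule.span ℝ (Set.range h)
  haveI : FiniteDimensional ℝ K :=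
    FiniteDimensional.span_of_finite ℝ (Set.finite_range h)
  let b := stdOrthonormalBasis ℝ K
  let h' : Fin n → K := fun j => ⟨h j, Submodule.subset_span ⟨j, rfl⟩⟩
  have hrep : ∀ j k, (⟪h j, h k⟫ : ℝ) = ∑ i, b.repr (h' j) i * b.repr (h' k) i := by
    intro j k
    calc (⟪h j, h k⟫ : ℝ) = ⟪h' j, h' k⟫ := (Submodule.coe_inner K (h' j) (h' k)).symm
      _ = ⟪b.repr (h' j), b.repr (h' k)⟫ := (b.repr.inner_map_map (h' j) (h' k)).symm
      _ = ∑ i, b.repr (h' j) i * b.repr (h' k) i := by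
          rw [PiLp.inner_apply]
          simp only [RCLike.inner_apply, conj_trivial]
          exact Finset.sum_congr rfl fun i _ => mul_comm _ _
  simp_rw [hrep]
  exact rep_quadform_nonneg n m (fun j i => b.repr (h' j) i) c

theorem exp_gram_poincare_matrix_ineq
    {H : Type*} [NormedAddCommGroup H] [InnerProductSpace ℝ H]
    (n : ℕ) (h : Fin n → H) (lam : Fin n → ℝ) :
    ∑ j, ∑ k, lam j * lam k * (Real.exp ⟪h j, h k⟫ - 1) ≤
      ∑ j, ∑ k, lam j * lam k * (Real.exp ⟪h j, h k⟫ * ⟪h j, h k⟫) := by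
  have hexp : ∀ y : ℝ, HasSum (fun m : ℕ => y ^ m / m !) (Real.exp y) := by
    intro y
    rw [Real.exp_eq_exp_ℝ]
    exact NormedSpace.expSeries_div_hasSum_exp y
  have h1 : ∀ y : ℝ, HasSum (fun m : ℕ => y ^ (m + 1) / (m + 1)!) (Real.exp y - 1) := by
    intro y
    refine (hasSum_nat_add_iff (f := fun m : ℕ => y ^ m / m !) 1).2 ?_
    simpa using hexp y
  have h2 : ∀ y : ℝ, HasSum (fun m : ℕ => y ^ (m + 1) / m !) (Real.exp y * y) := by
    intro y
    have hh := (hexp y).mul_left y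
    have : (fun m : ℕ => y ^ (m + 1) / m !) = fun m : ℕ => y * (y ^ m / m !) := by
      funext m; rw [pow_succ]; ring
    rw [this, mul_comm]
    exact hh
  have HL : HasSum
      (fun m : ℕ => ∑ j, ∑ k, lam j * lam k * (⟪h j, h k⟫ ^ (m + 1) / (m + 1)!))
      (∑ j, ∑ k, lam j * lam k * (Real.exp ⟪h j, h k⟫ - 1)) :=
    hasSum_sum fun j _ => hasSum_sum fun k _ => (h1 _).mul_left (lam j * lam k)
  have HR : HasSum
      (fun m : ℕ => ∑ j, ∑ k, lam j * lam k * (⟪h j, h k⟫ ^ (m + 1) / m !))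
      (∑ j, ∑ k, lam j * lam k * (Real.exp ⟪h j, h k⟫ * ⟪h j, h k⟫)) :=
    hasSum_sum fun j _ => hasSum_sum fun k _ => (h2 _).mul_left (lam j * lam k)
  refine hasSum_le (fun m => ?_) HL HR
  have e : ∀ c : ℝ, (∑ j, ∑ k, lam j * lam k * (⟪h j, h k⟫ ^ (m + 1) / c))
      = (∑ j, ∑ k, lam j * lam k * ⟪h j, h k⟫ ^ (m + 1)) / c := by
    intro c
    rw [Finset.sum_div]
    exact Finset.sum_congr rfl fun j _ => by
      rw [Finset.sum_div]
      exact Finset.sum_congr rfl fun k _ => by ring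
  rw [e, e]
  have hS : 0 ≤ ∑ j, ∑ k, lam j * lam k * ⟪h j, h k⟫ ^ (m + 1) :=
    gram_pow_quadform_nonneg n (m + 1) h lam
  gcongr
  exact Nat.le_succ m
end

section
/- For a polynomial f : ℝ → ℝ and standard Gaussian measure μ on ℝ, (∫ f dμ)² = ∫ f² dμ + ∑_{l≥1} ((−1)^l / l!) ∫ (f^{(l)})² dμ, where f^{(l)} is the l-th derivative and the sum is finite since f is a polynomial. -/
open MeasureTheory Polynomial ProbabilityTheory Real Filter Topology
open scoped ENNReal NNReal

noncomputable def phi (x : ℝ) : ℝ := gaussianPDFReal 0 1 x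

lemma phi_eq : phi = fun x => (Real.sqrt (2*π))⁻¹ * Real.exp (-(x^2/2)) := by
  funext x
  simp only [phi, gaussianPDFReal, NNReal.coe_one, mul_one, sub_zero]
  rw [neg_div]

lemma phi_nonneg (x : ℝ) : 0 ≤ phi x := gaussianPDFReal_nonneg 0 1 x

lemma phi_neg (x : ℝ) : phi (-x) = phi x := by rw [phi_eq]; simp

lemma measurable_phi : Measurable phi := measurable_gaussianPDFReal 0 1

lemma hasDerivAt_phi (x : ℝ) : HasDerivAt phi (-x * phi x) x := by
  rw [phi_eq]
  have h1 : HasDerivAt (fun y : ℝ => -(y^2/2)) (-x) x := by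
    have := ((hasDerivAt_pow 2 x).div_const 2).fun_neg
    simpa using this
  have h := (h1.exp).const_mul (Real.sqrt (2*π))⁻¹
  refine h.congr_deriv ?_
  beta_reduce
  ring

lemma integrable_pow_phi (n : ℕ) : Integrable (fun x : ℝ => x ^ n * phi x) := by
  rw [phi_eq]
  have key : Integrable (fun x : ℝ => x ^ (n : ℝ) * Real.exp (-(1/2) * x ^ 2)) :=
    integrable_rpow_mul_exp_neg_mul_sq (by norm_num : (0:ℝ) < 1/2)
      (neg_one_lt_zero.trans_le (Nat.cast_nonneg n))
  refine (key.const_mul (Real.sqrt (2*π))⁻¹).congr (Eventually.of_forall fun x => ?_)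
  simp only [Real.rpow_natCast]
  ring_nf

lemma integrable_poly_phi (p : ℝ[X]) : Integrable (fun x : ℝ => p.eval x * phi x) := by
  induction p using Polynomial.induction_on' with
  | add p q hp hq =>
    simpa [eval_add, add_mul] using hp.fun_add hq
  | monomial n c =>
    simp only [eval_monomial]
    simpa [mul_assoc] using (integrable_pow_phi n).const_mul c

lemma tendsto_poly_phi_atTop (p : ℝ[X]) :
    Tendsto (fun x => p.eval x * phi x) atTop (𝓝 0) := by
  rw [phi_eq]
  have h1 : Tendsto (fun x => p.eval x / Real.exp x) atTop (𝓝 0) :=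
    p.tendsto_div_exp_atTop
  have h2 : Tendsto (fun x : ℝ => Real.exp (x - x^2/2)) atTop (𝓝 0) := by
    apply Real.tendsto_exp_atBot.comp
    have : Tendsto (fun x : ℝ => x * (x/2 - 1)) atTop atTop :=
      tendsto_id.atTop_mul_atTop₀
        (tendsto_atTop_add_const_right _ (-1) (tendsto_id.atTop_div_const two_pos))
    have h := tendsto_neg_atTop_atBot.comp this
    refine h.congr fun x => ?_
    simp only [Function.comp]
    ring
  have h3 := ((h1.mul h2).const_mul (Real.sqrt (2*π))⁻¹)
  rw [mul_zero, mul_zero] at h3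
  refine h3.congr fun x => ?_
  have hx : Real.exp x ≠ 0 := (Real.exp_pos x).ne'
  have : x - x^2/2 = -(x^2/2) + x := by ring
  rw [this, Real.exp_add]
  field_simp

lemma tendsto_poly_phi_atBot (p : ℝ[X]) :
    Tendsto (fun x => p.eval x * phi x) atBot (𝓝 0) := by
  have := (tendsto_poly_phi_atTop (p.comp (-X))).comp tendsto_neg_atBot_atTop
  refine this.congr fun x => ?_
  simp [Function.comp, eval_comp, phi_neg]

noncomputable def J (p : ℝ[X]) : ℝ := ∫ x, p.eval x * phi x

lemma J_add (p q : ℝ[X]) : J (p + q) = J p + J q := by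
  rw [J, J, J, ← integral_add (integrable_poly_phi p) (integrable_poly_phi q)]
  congr 1; funext x; simp [add_mul]

lemma J_C_mul (c : ℝ) (p : ℝ[X]) : J (C c * p) = c * J p := by
  rw [J, J, ← integral_const_mul]
  congr 1; funext x; simp; ring

lemma J_zero : J 0 = 0 := by simp [J]

lemma J_one : J 1 = 1 := by
  rw [J]
  simpa [phi] using integral_gaussianPDFReal_eq_one 0 (one_ne_zero)

/-- Stein / Gaussian integration by parts. -/
lemma J_X_mul (p : ℝ[X]) : J (X * p) = J (derivative p) := by
  have hF : ∀ x : ℝ, HasDerivAt (fun y => p.eval y * phi y)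
      (((derivative p - X * p).eval x) * phi x) x := by
    intro x
    have := (p.hasDerivAt x).fun_mul (hasDerivAt_phi x)
    refine this.congr_deriv ?_
    simp only [eval_sub, eval_mul, eval_X]
    ring
  have hint : Integrable (fun x => ((derivative p - X * p).eval x) * phi x) :=
    integrable_poly_phi _
  have h0 := integral_of_hasDerivAt_of_tendsto hF hint
    (tendsto_poly_phi_atBot p) (tendsto_poly_phi_atTop p)
  rw [sub_zero] at h0
  have hsplit : ∫ x, ((derivative p - X * p).eval x) * phi x
      = J (derivative p) - J (X * p) := by
    rw [J, J, ← integral_sub (integrable_poly_phi _) (integrable_poly_phi _)]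
    congr 1; funext x; simp [sub_mul]
  rw [hsplit] at h0
  linarith

noncomputable def term (f g : ℝ[X]) (l : ℕ) : ℝ :=
  (-1 : ℝ) ^ l / (Nat.factorial l) * J (derivative^[l] f * derivative^[l] g)

lemma term_eq_zero (f g : ℝ[X]) {l : ℕ} (h : f.natDegree < l) : term f g l = 0 := by
  rw [term, iterate_derivative_eq_zero h, zero_mul, J_zero, mul_zero]

lemma summable_term (f g : ℝ[X]) : Summable (term f g) := by
  refine summable_of_ne_finset_zero (s := Finset.range (f.natDegree + 1)) fun l hl => ?_
  exact term_eq_zero f g (by simpa [Nat.lt_succ_iff, not_le] using Finset.mem_range.not.mp hl)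

noncomputable def S (f g : ℝ[X]) : ℝ := ∑' l, term f g l

lemma S_def (f g : ℝ[X]) : S f g = ∑' l, term f g l := rfl

lemma iter_deriv_add (p q : ℝ[X]) (l : ℕ) :
    derivative^[l] (p + q) = derivative^[l] p + derivative^[l] q := by
  induction l with
  | zero => rfl
  | succ l ih => rw [Function.iterate_succ_apply', ih, derivative_add,
      Function.iterate_succ_apply', Function.iterate_succ_apply']

lemma term_add (p q g : ℝ[X]) (l : ℕ) : term (p + q) g l = term p g l + term q g l := by
  rw [term, term, term, iter_deriv_add, add_mul, J_add, mul_add]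

lemma S_add (p q g : ℝ[X]) : S (p + q) g = S p g + S q g := by
  rw [S_def, S_def, S, ← Summable.tsum_add (summable_term p g) (summable_term q g)]
  exact tsum_congr (term_add p q g)

lemma S_C (c : ℝ) (g : ℝ[X]) : S (C c) g = c * J g := by
  rw [S, tsum_eq_single 0]
  · simp [term, J_C_mul]
  · intro l hl
    exact term_eq_zero _ _ (by simpa [Nat.pos_iff_ne_zero] using hl)

lemma J_C (c : ℝ) : J (C c) = c := by
  have := J_C_mul c 1
  simpa [J_one] using this

lemma iter_deriv_X_mul (h : ℝ[X]) (l : ℕ) :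
    derivative^[l + 1] (X * h) =
      X * derivative^[l + 1] h + C ((l : ℝ) + 1) * derivative^[l] h := by
  induction l with
  | zero => simp [derivative_mul]; ring
  | succ l ih =>
    rw [Function.iterate_succ_apply', ih, derivative_add, derivative_mul, derivative_mul,
      derivative_X, derivative_C, ← Function.iterate_succ_apply' derivative,
      ← Function.iterate_succ_apply' derivative]
    have hC : (C ((l:ℝ) + 1 + 1) : ℝ[X]) = C ((l:ℝ) + 1) + C 1 := by rw [← C_add]
    push_cast
    rw [hC, C_1]
    ring

lemma S_X_mul (h g : ℝ[X]) (IH : S (derivative h) g = J (derivative h) * J g) :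
    S (X * h) g = J (X * h) * J g := by
  set u : ℕ → ℝ := fun l =>
    (-1 : ℝ) ^ l / (Nat.factorial l) * J (derivative^[l] h * derivative^[l + 1] g) with hu
  have hu_sum : Summable u := by
    refine summable_of_ne_finset_zero (s := Finset.range (h.natDegree + 1)) fun l hl => ?_
    have : h.natDegree < l := by simpa [Nat.lt_succ_iff, not_le] using Finset.mem_range.not.mp hl
    simp [hu, iterate_derivative_eq_zero this, J_zero]
  have hv_sum : Summable (term (derivative h) g) := summable_term _ _
  -- J of derivative of a product
  have hJd : ∀ p q : ℝ[X], J (X * (p * q)) =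
      J (derivative p * q) + J (p * derivative q) := by
    intro p q
    rw [J_X_mul, derivative_mul, J_add]
  have hA : term (X * h) g 0 = term (derivative h) g 0 + u 0 := by
    simp only [term, hu, Function.iterate_zero_apply, Function.iterate_one]
    rw [mul_assoc, hJd]
    norm_num
  have hB : ∀ l, term (X * h) g (l + 1) =
      term (derivative h) g (l + 1) + u (l + 1) - u l := by
    intro l
    have harith : ((-1 : ℝ) ^ (l+1) / (Nat.factorial (l+1))) * ((l : ℝ) + 1)
        = -((-1 : ℝ) ^ l / (Nat.factorial l)) := by
      rw [Nat.factorial_succ]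
      have h1 : ((Nat.factorial l : ℝ)) ≠ 0 := Nat.cast_ne_zero.mpr (Nat.factorial_ne_zero l)
      have h2 : ((l : ℝ) + 1) ≠ 0 := by positivity
      push_cast
      field_simp
      ring
    have hD : derivative^[l + 1] (derivative h) = derivative^[l + 1 + 1] h :=
      (Function.iterate_succ_apply derivative (l+1) h).symm
    have hD2 : derivative (derivative^[l+1] h) = derivative^[l + 1 + 1] h :=
      (Function.iterate_succ_apply' derivative (l+1) h).symm
    have hD3 : derivative (derivative^[l+1] g) = derivative^[l + 1 + 1] g :=
      (Function.iterate_succ_apply' derivative (l+1) g).symm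
    rw [term, iter_deriv_X_mul, add_mul, J_add, mul_assoc, hJd, hD2, hD3]
    have hC : J (C ((l:ℝ) + 1) * derivative^[l] h * derivative^[l+1] g)
        = ((l : ℝ) + 1) * J (derivative^[l] h * derivative^[l+1] g) := by
      rw [mul_assoc, J_C_mul]
    rw [hC, term, hD, hu]
    simp only []
    linear_combination harith * J (derivative^[l] h * derivative^[l+1] g)
  -- telescoping
  have hterm_sum := summable_term (X * h) g
  have hv_shift : Summable (fun l => term (derivative h) g (l + 1)) :=
    (summable_nat_add_iff 1).mpr hv_sum
  have hu_shift : Summable (fun l => u (l + 1)) := (summable_nat_add_iff 1).mpr hu_sum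
  have key : S (X * h) g = S (derivative h) g := by
    rw [S_def, S_def, Summable.tsum_eq_zero_add hterm_sum, Summable.tsum_eq_zero_add hv_sum]
    have : ∑' l, term (X * h) g (l + 1)
        = (∑' l, term (derivative h) g (l + 1)) + ((∑' l, u (l + 1)) - ∑' l, u l) := by
      rw [← Summable.tsum_sub hu_shift hu_sum, ← Summable.tsum_add hv_shift (hu_shift.sub hu_sum)]
      exact tsum_congr fun l => by rw [hB l]; ring
    rw [this, Summable.tsum_eq_zero_add hu_sum, hA]
    ring
  rw [key, IH, J_X_mul]

lemma S_main : ∀ n : ℕ, ∀ f : ℝ[X], f.natDegree ≤ n → ∀ g : ℝ[X], S f g = J f * J g := by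
  intro n
  induction n with
  | zero =>
    intro f hf g
    rw [Polynomial.eq_C_of_natDegree_le_zero hf, S_C, J_C]
  | succ n ih =>
    intro f hf g
    have hdvx : f.divX.natDegree ≤ n := by
      rw [natDegree_divX_eq_natDegree_tsub_one]
      omega
    have hder : (derivative f.divX).natDegree ≤ n :=
      le_trans (natDegree_derivative_le _) (le_trans (Nat.sub_le _ _) hdvx)
    calc S f g = S (X * f.divX + C (f.coeff 0)) g := by rw [X_mul_divX_add]
    _ = S (X * f.divX) g + S (C (f.coeff 0)) g := S_add _ _ _
    _ = J (X * f.divX) * J g + f.coeff 0 * J g := by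
        rw [S_X_mul _ _ (ih _ hder g), S_C]
    _ = (J (X * f.divX) + J (C (f.coeff 0))) * J g := by rw [J_C]; ring
    _ = J f * J g := by rw [← J_add, X_mul_divX_add]


lemma integral_gauss (p : ℝ[X]) : ∫ x, p.eval x ∂(gaussianReal 0 1) = J p := by
  rw [gaussianReal_of_var_ne_zero 0 one_ne_zero]
  have hd : (gaussianPDF 0 1) = fun x => ((phi x).toNNReal : ℝ≥0∞) := rfl
  rw [hd, integral_withDensity_eq_integral_smul measurable_phi.real_toNNReal]
  rw [J]
  congr 1; funext x
  rw [NNReal.smul_def, Real.coe_toNNReal _ (phi_nonneg x), smul_eq_mul, mul_comm]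

lemma integral_gauss_sq (p : ℝ[X]) :
    ∫ x, (p.eval x) ^ 2 ∂(gaussianReal 0 1) = J (p * p) := by
  rw [← integral_gauss (p * p)]
  congr 1; funext x; rw [eval_mul, sq]

theorem sq_integral_poly_eq (f : Polynomial ℝ) :
    (∫ x, f.eval x ∂(gaussianReal 0 1)) ^ 2 =
      (∫ x, f.eval x ^ 2 ∂(gaussianReal 0 1)) +
        ∑' l : ℕ, ((-1 : ℝ) ^ (l + 1) / (Nat.factorial (l + 1)) *
          ∫ x, ((derivative^[l + 1] f).eval x) ^ 2 ∂(gaussianReal 0 1)) := by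
  have hmain := S_main f.natDegree f le_rfl f
  rw [integral_gauss, integral_gauss_sq, sq, ← hmain, S_def,
    Summable.tsum_eq_zero_add (summable_term f f)]
  congr 1
  · simp [term]
  · exact tsum_congr fun l => by rw [term, integral_gauss_sq]
end

section
/- For any vectors h₁,…,hₙ in a real inner product space H, any λ₁,…,λₙ ∈ ℝ, and any k ∈ ℕ, the matrix with entries c_{jk} = 1 − e^{⟨h_j,h_k⟩} + ∑_{l=1}^{2k−1} ((−1)^{l+1}/l!) e^{⟨h_j,h_k⟩} ⟨h_j,h_k⟩^l is positive semi-definite, i.e. ∑_{j,k} λ_j λ_k c_{jk} ≥ 0. -/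
open Real RealInnerProductSpace

lemma HK.sum_sq {n : ℕ} {κ : Type*} [Fintype κ] (P : Fin n → κ → ℝ) (lam : Fin n → ℝ) :
    0 ≤ ∑ j, ∑ i, lam j * lam i * ∑ g : κ, P j g * P i g := by
  have key : ∑ j, ∑ i, lam j * lam i * ∑ g : κ, P j g * P i g
      = ∑ g : κ, (∑ j, lam j * P j g) ^ 2 := by
    simp_rw [Finset.mul_sum]
    rw [show (∑ j, ∑ i, ∑ g : κ, lam j * lam i * (P j g * P i g))
        = ∑ j, ∑ g : κ, ∑ i, lam j * lam i * (P j g * P i g) from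
      Finset.sum_congr rfl fun j _ => Finset.sum_comm, Finset.sum_comm]
    refine Finset.sum_congr rfl fun g _ => ?_
    rw [sq, Finset.sum_mul_sum]
    exact Finset.sum_congr rfl fun j _ => Finset.sum_congr rfl fun i _ => by ring
  rw [key]
  exact Finset.sum_nonneg fun g _ => sq_nonneg _


lemma HK.gram_pow_nonneg {H : Type*} [NormedAddCommGroup H] [InnerProductSpace ℝ H]
    {n : ℕ} (h : Fin n → H) (lam : Fin n → ℝ) (N : ℕ) :
    0 ≤ ∑ j, ∑ i, lam j * lam i * ⟪h j, h i⟫ ^ N := by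
  set W := Submodule.span ℝ (Set.range h) with hW
  haveI : FiniteDimensional ℝ W := FiniteDimensional.span_of_finite ℝ (Set.finite_range h)
  set b := stdOrthonormalBasis ℝ W with hb
  set hw : Fin n → W := fun j => ⟨h j, Submodule.subset_span ⟨j, rfl⟩⟩ with hhw
  set a : Fin n → Fin (Module.finrank ℝ W) → ℝ := fun j r => ⟪b r, hw j⟫ with ha
  have hinner : ∀ j i, ⟪h j, h i⟫ = ∑ r, a j r * a i r := by
    intro j i
    have h3 := b.sum_inner_mul_inner (hw j) (hw i)
    have h2 : ⟪hw j, hw i⟫ = ⟪h j, h i⟫ := rfl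
    rw [h2] at h3
    rw [← h3]
    refine Finset.sum_congr rfl fun r _ => ?_
    simp only [ha]
    rw [real_inner_comm (b r) (hw j)]
  have hpow : ∀ j i, ⟪h j, h i⟫ ^ N
      = ∑ g : Fin N → Fin (Module.finrank ℝ W),
          (∏ t, a j (g t)) * (∏ t, a i (g t)) := by
    intro j i
    rw [hinner j i]
    have h1 : (∑ r, a j r * a i r) ^ N = ∏ _t : Fin N, ∑ r, a j r * a i r := by
      simp [Finset.prod_const]
    rw [h1, Finset.prod_univ_sum, Fintype.piFinset_univ]
    exact Finset.sum_congr rfl fun g _ => by rw [Finset.prod_mul_distrib]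
  have hgoal : ∑ j, ∑ i, lam j * lam i * ⟪h j, h i⟫ ^ N
      = ∑ j, ∑ i, lam j * lam i * ∑ g : Fin N → Fin (Module.finrank ℝ W),
          (∏ t, a j (g t)) * (∏ t, a i (g t)) :=
    Finset.sum_congr rfl fun j _ => Finset.sum_congr rfl fun i _ => by rw [hpow]
  rw [hgoal]
  apply HK.sum_sq
lemma HK.exp_kernel_nonneg {H : Type*} [NormedAddCommGroup H] [InnerProductSpace ℝ H]
    {n : ℕ} (h : Fin n → H) (lam : Fin n → ℝ) (M : ℕ) {u : ℝ} (hu : 0 ≤ u) :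
    0 ≤ ∑ j, ∑ i, lam j * lam i * (⟪h j, h i⟫ ^ M * Real.exp (u * ⟪h j, h i⟫)) := by
  set F : Fin n → Fin n → ℕ → ℝ :=
    fun j i N => lam j * lam i * ⟪h j, h i⟫ ^ M * ((u * ⟪h j, h i⟫) ^ N / (Nat.factorial N : ℝ))
    with hF
  have hsum : ∀ j i, Summable (F j i) := fun j i =>
    (Real.summable_pow_div_factorial (u * ⟪h j, h i⟫)).mul_left _
  have h1 : ∀ j i : Fin n, lam j * lam i * (⟪h j, h i⟫ ^ M * Real.exp (u * ⟪h j, h i⟫))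
      = ∑' N : ℕ, F j i N := by
    intro j i
    rw [Real.exp_eq_exp_ℝ, NormedSpace.exp_eq_tsum_div]
    calc lam j * lam i * (⟪h j, h i⟫ ^ M * ∑' N : ℕ, (u * ⟪h j, h i⟫) ^ N / (Nat.factorial N : ℝ))
        = (lam j * lam i * ⟪h j, h i⟫ ^ M) * ∑' N : ℕ, (u * ⟪h j, h i⟫) ^ N / (Nat.factorial N : ℝ) := by
          ring
      _ = ∑' N : ℕ, F j i N := tsum_mul_left.symm
  have h2 : ∑ j, ∑ i, lam j * lam i * (⟪h j, h i⟫ ^ M * Real.exp (u * ⟪h j, h i⟫))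
      = ∑' N : ℕ, ∑ j, ∑ i, F j i N := by
    rw [show (∑ j, ∑ i, lam j * lam i * (⟪h j, h i⟫ ^ M * Real.exp (u * ⟪h j, h i⟫)))
        = ∑ j, ∑ i, ∑' N : ℕ, F j i N from
      Finset.sum_congr rfl fun j _ => Finset.sum_congr rfl fun i _ => h1 j i]
    rw [show (∑ j, ∑ i, ∑' N : ℕ, F j i N) = ∑ j, ∑' N : ℕ, ∑ i, F j i N from
      Finset.sum_congr rfl fun j _ => (Summable.tsum_finsetSum fun i _ => hsum j i).symm]
    exact (Summable.tsum_finsetSum fun j _ => summable_sum fun i _ => hsum j i).symm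
  rw [h2]
  refine tsum_nonneg fun N => ?_
  have h3 : ∀ j i : Fin n, F j i N
      = (u ^ N / (Nat.factorial N : ℝ)) * (lam j * lam i * ⟪h j, h i⟫ ^ (M + N)) := by
    intro j i
    rw [hF]
    simp only
    rw [mul_pow, pow_add]
    ring
  rw [show (∑ j, ∑ i, F j i N)
      = (u ^ N / (Nat.factorial N : ℝ)) * ∑ j, ∑ i, lam j * lam i * ⟪h j, h i⟫ ^ (M + N) by
    rw [Finset.mul_sum]
    exact Finset.sum_congr rfl fun j _ => by
      rw [Finset.mul_sum]; exact Finset.sum_congr rfl fun i _ => h3 j i]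
  exact mul_nonneg (div_nonneg (pow_nonneg hu N) (Nat.cast_nonneg _))
    (HK.gram_pow_nonneg h lam (M + N))
noncomputable def HK.c (m : ℕ) (x : ℝ) : ℝ :=
  1 - Real.exp x + ∑ l ∈ Finset.Icc 1 m,
    (-1 : ℝ) ^ (l + 1) / (Nat.factorial l) * (Real.exp x * x ^ l)

lemma HK.telescope (m : ℕ) (hm : Odd m) (E x : ℝ) :
    ∑ l ∈ Finset.Icc 1 m, (-1 : ℝ) ^ (l + 1) / (Nat.factorial l) *
      (E * x ^ l + E * (l * x ^ (l - 1)))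
    = E * x ^ m / (Nat.factorial m) + E := by
  set T : ℕ → ℝ := fun l => E * ((-1 : ℝ) ^ (l + 1) * x ^ l / (Nat.factorial l)) with hT
  have step : ∀ l ∈ Finset.Icc 1 m, (-1 : ℝ) ^ (l + 1) / (Nat.factorial l) *
      (E * x ^ l + E * (l * x ^ (l - 1))) = T l - T (l - 1) := by
    intro l hl
    obtain ⟨p, rfl⟩ := Nat.exists_eq_add_of_le (Finset.mem_Icc.mp hl).1
    simp only [hT, Nat.add_sub_cancel_left, Nat.add_comm 1 p]
    simp only [Nat.add_sub_cancel]
    have hfac : ((Nat.factorial (p + 1) : ℝ)) = (p + 1) * Nat.factorial p := by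
      rw [Nat.factorial_succ]; push_cast; ring
    have hfp : (Nat.factorial p : ℝ) ≠ 0 := Nat.cast_ne_zero.mpr (Nat.factorial_ne_zero p)
    have hfp1 : ((p : ℝ) + 1) ≠ 0 := by positivity
    rw [hfac]
    rw [pow_succ x p]
    field_simp
    push_cast
    ring
  rw [Finset.sum_congr rfl step]
  have htel : ∑ l ∈ Finset.Icc 1 m, (T l - T (l - 1)) = T m - T 0 := by
    rw [← Finset.Ico_add_one_right_eq_Icc, Finset.sum_Ico_eq_sum_range]
    simp only [Nat.add_sub_cancel, Nat.add_sub_cancel_left, Nat.add_comm 1]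
    exact Finset.sum_range_sub T m
  rw [htel, hT]
  simp only [pow_zero, Nat.factorial_zero]
  have hmpow : (-1 : ℝ) ^ (m + 1) = 1 := (hm.add_one).neg_one_pow
  rw [hmpow]
  push_cast
  ring

lemma HK.hasDerivAt_c (m : ℕ) (hm : Odd m) (x : ℝ) :
    HasDerivAt (HK.c m) (Real.exp x * x ^ m / (Nat.factorial m)) x := by
  have h1 : HasDerivAt (fun x : ℝ => 1 - Real.exp x) (-Real.exp x) x := by
    simpa using (hasDerivAt_const x (1 : ℝ)).fun_sub (Real.hasDerivAt_exp x)
  have h2 : ∀ l ∈ Finset.Icc 1 m, HasDerivAt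
      (fun x : ℝ => (-1 : ℝ) ^ (l + 1) / (Nat.factorial l) * (Real.exp x * x ^ l))
      ((-1 : ℝ) ^ (l + 1) / (Nat.factorial l) *
        (Real.exp x * x ^ l + Real.exp x * (l * x ^ (l - 1)))) x := by
    intro l _
    exact ((Real.hasDerivAt_exp x).mul (hasDerivAt_pow l x)).const_mul _
  have h3 := HasDerivAt.fun_sum h2
  have h4 := h1.fun_add h3
  have : -Real.exp x + ∑ l ∈ Finset.Icc 1 m, (-1 : ℝ) ^ (l + 1) / (Nat.factorial l) *
      (Real.exp x * x ^ l + Real.exp x * (l * x ^ (l - 1)))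
      = Real.exp x * x ^ m / (Nat.factorial m) := by
    rw [HK.telescope m hm (Real.exp x) x]; ring
  rw [this] at h4
  exact h4

lemma HK.c_zero (m : ℕ) : HK.c m 0 = 0 := by
  unfold HK.c
  rw [Finset.sum_eq_zero fun l hl => by
    have h1 : 1 ≤ l := (Finset.mem_Icc.mp hl).1
    rw [zero_pow (by omega : l ≠ 0)]; ring]
  simp

lemma HK.c_eq_integral (m : ℕ) (hm : Odd m) (x : ℝ) :
    HK.c m x = ∫ u in (0:ℝ)..1, x ^ (m + 1) * (u ^ m * Real.exp (u * x)) / (Nat.factorial m) := by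
  have hcont : Continuous (fun s : ℝ => Real.exp s * s ^ m / (Nat.factorial m)) := by
    fun_prop
  have hftc := intervalIntegral.integral_eq_sub_of_hasDerivAt
    (f := HK.c m) (f' := fun s => Real.exp s * s ^ m / (Nat.factorial m))
    (a := 0) (b := x)
    (fun t _ => HK.hasDerivAt_c m hm t) (hcont.intervalIntegrable 0 x)
  rw [HK.c_zero, sub_zero] at hftc
  rw [← hftc]
  have hsub := intervalIntegral.smul_integral_comp_mul_left
    (f := fun s => Real.exp s * s ^ m / (Nat.factorial m)) (a := (0:ℝ)) (b := 1) x
  rw [mul_zero, mul_one] at hsub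
  rw [← hsub]
  rw [smul_eq_mul, ← intervalIntegral.integral_const_mul]
  refine intervalIntegral.integral_congr fun u _ => ?_
  rw [mul_pow, pow_succ]
  ring

theorem houdre_kagan_matrix_posSemidef
    {H : Type*} [NormedAddCommGroup H] [InnerProductSpace ℝ H]
    (n : ℕ) (h : Fin n → H) (lam : Fin n → ℝ) (k : ℕ) (hk : 1 ≤ k) :
    0 ≤ ∑ j, ∑ i, lam j * lam i *
      (1 - Real.exp ⟪h j, h i⟫ +
        ∑ l ∈ Finset.Icc 1 (2 * k - 1),
          (-1 : ℝ) ^ (l + 1) / (Nat.factorial l) *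
            (Real.exp ⟪h j, h i⟫ * ⟪h j, h i⟫ ^ l)) := by
  set m : ℕ := 2 * k - 1 with hmdef
  have hm : Odd m := ⟨k - 1, by omega⟩
  show 0 ≤ ∑ j, ∑ i, lam j * lam i * HK.c m ⟪h j, h i⟫
  set g : Fin n → Fin n → ℝ → ℝ := fun j i u =>
    lam j * lam i * (⟪h j, h i⟫ ^ (m + 1) * (u ^ m * Real.exp (u * ⟪h j, h i⟫))
      / (Nat.factorial m)) with hg
  have hcont : ∀ j i, Continuous (g j i) := by
    intro j i
    apply Continuous.mul continuous_const
    fun_prop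
  have hterm : ∀ j i, lam j * lam i * HK.c m ⟪h j, h i⟫ = ∫ u in (0:ℝ)..1, g j i u := by
    intro j i
    rw [HK.c_eq_integral m hm ⟪h j, h i⟫, ← intervalIntegral.integral_const_mul]
  have h5 : ∑ j, ∑ i, lam j * lam i * HK.c m ⟪h j, h i⟫
      = ∫ u in (0:ℝ)..1, ∑ j, ∑ i, g j i u := by
    rw [intervalIntegral.integral_finset_sum (fun j _ =>
      ((continuous_finset_sum _ fun i _ => hcont j i).intervalIntegrable 0 1))]
    refine Finset.sum_congr rfl fun j _ => ?_
    rw [intervalIntegral.integral_finset_sum (fun i _ => ((hcont j i).intervalIntegrable 0 1))]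
    exact Finset.sum_congr rfl fun i _ => hterm j i
  rw [h5]
  refine intervalIntegral.integral_nonneg (by norm_num) fun u hu => ?_
  have hu0 : (0:ℝ) ≤ u := hu.1
  have hfac : ∑ j, ∑ i, g j i u
      = (u ^ m / (Nat.factorial m)) *
        ∑ j, ∑ i, lam j * lam i * (⟪h j, h i⟫ ^ (m + 1) * Real.exp (u * ⟪h j, h i⟫)) := by
    rw [Finset.mul_sum]
    refine Finset.sum_congr rfl fun j _ => ?_
    rw [Finset.mul_sum]
    exact Finset.sum_congr rfl fun i _ => by rw [hg]; ring
  rw [hfac]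
  exact mul_nonneg (div_nonneg (pow_nonneg hu0 m) (Nat.cast_nonneg _))
    (HK.exp_kernel_nonneg h lam (m + 1) hu0)
end

section
/- Let μ be the standard Gaussian measure on ℝⁿ, and let ν = ∑_i p_i E_{c_i} be a finite convex combination of stochastic exponentials (p_i ≥ 0, ∑ p_i = 1, c_i ∈ ℝⁿ). Then for every F = ∑_{k=1}^m λ_k E_{h_k} in the linear span of stochastic exponentials, ∫ (F ⋄ F) ν dμ ≤ ∫ F² ν dμ ≤ ∫ (F ⋄ F) ν dμ + ∫ |∇F|² ν dμ, where F ⋄ F := ∑_{j,k} λ_j λ_k E_{h_j + h_k}. -/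
open MeasureTheory Real RealInnerProductSpace

noncomputable def stdGaussian (n : ℕ) : Measure (EuclideanSpace ℝ (Fin n)) :=
  volume.withDensity
    (fun x => ENNReal.ofReal ((2 * π) ^ (-(n : ℝ) / 2) * Real.exp (-‖x‖ ^ 2 / 2)))

noncomputable def stochExp {n : ℕ} (a : EuclideanSpace ℝ (Fin n)) :
    EuclideanSpace ℝ (Fin n) → ℝ :=
  fun w => Real.exp (⟪a, w⟫ - ‖a‖ ^ 2 / 2)

namespace WickAux

open Nat

/-! ### Series coefficients and positivity -/

noncomputable def g1 : ℕ → ℝ := fun r => if r = 0 then 0 else ((r ! : ℝ))⁻¹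

noncomputable def g2 : ℕ → ℝ := fun r => if r = 0 then 0 else ((r : ℝ) - 1) / (r ! : ℝ)

lemma g1_nonneg (r : ℕ) : 0 ≤ g1 r := by
  unfold g1; split <;> positivity

lemma g2_nonneg (r : ℕ) : 0 ≤ g2 r := by
  unfold g2
  split
  · exact le_refl 0
  · rename_i hr
    apply div_nonneg _ (by positivity)
    rw [sub_nonneg]
    exact_mod_cast Nat.one_le_iff_ne_zero.mpr hr

lemma exp_tsum (x : ℝ) : rexp x = ∑' r : ℕ, x ^ r / r ! := by
  rw [Real.exp_eq_exp_ℝ, NormedSpace.exp_eq_tsum_div]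

lemma summable_shift (x : ℝ) : Summable (fun r : ℕ => x ^ (r + 1) / ((r + 1)! : ℝ)) :=
  (Real.summable_pow_div_factorial x).comp_injective (fun a b hab => by omega)

lemma summable_shift' (x : ℝ) : Summable (fun r : ℕ => x ^ (r + 1) / (r ! : ℝ)) := by
  have : (fun r : ℕ => x ^ (r + 1) / (r ! : ℝ)) = fun r : ℕ => x * (x ^ r / r !) := by
    funext r; rw [pow_succ]; ring
  rw [this]
  exact (Real.summable_pow_div_factorial x).mul_left x

lemma tsum_shift' (x : ℝ) : ∑' r : ℕ, x ^ (r + 1) / (r ! : ℝ) = x * rexp x := by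
  rw [exp_tsum, ← tsum_mul_left]
  congr 1 with r
  rw [pow_succ]; ring

lemma tsum_shift (x : ℝ) : ∑' r : ℕ, x ^ (r + 1) / ((r + 1)! : ℝ) = rexp x - 1 := by
  have h := Summable.tsum_eq_zero_add (Real.summable_pow_div_factorial x)
  rw [exp_tsum]
  rw [h]
  simp

lemma summable_g1 (x : ℝ) : Summable (fun r : ℕ => g1 r * x ^ r) := by
  apply (summable_nat_add_iff 1).mp
  have : (fun r : ℕ => g1 (r + 1) * x ^ (r + 1)) = fun r : ℕ => x ^ (r + 1) / (r + 1)! := by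
    funext r
    simp only [g1, Nat.succ_ne_zero, if_false]
    rw [div_eq_inv_mul]
  rw [this]
  exact summable_shift x

lemma tsum_g1 (x : ℝ) : ∑' r : ℕ, g1 r * x ^ r = rexp x - 1 := by
  rw [Summable.tsum_eq_zero_add (summable_g1 x)]
  have h0 : g1 0 * x ^ 0 = 0 := by simp [g1]
  rw [h0, zero_add, ← tsum_shift x]
  congr 1 with r
  simp only [g1, Nat.succ_ne_zero, if_false]
  rw [div_eq_inv_mul]

lemma g2_succ (r : ℕ) (x : ℝ) :
    g2 (r + 1) * x ^ (r + 1) = x ^ (r + 1) / (r ! : ℝ) - x ^ (r + 1) / ((r + 1)! : ℝ) := by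
  simp only [g2, Nat.succ_ne_zero, if_false]
  have h1 : ((r ! : ℝ)) ≠ 0 := by positivity
  have h3 : (((r + 1)! : ℝ)) = ((r : ℝ) + 1) * (r ! : ℝ) := by
    rw [Nat.factorial_succ]; push_cast; ring
  rw [h3]
  push_cast
  field_simp

lemma summable_g2 (x : ℝ) : Summable (fun r : ℕ => g2 r * x ^ r) := by
  apply (summable_nat_add_iff 1).mp
  have : (fun r : ℕ => g2 (r + 1) * x ^ (r + 1))
      = fun r : ℕ => x ^ (r + 1) / (r ! : ℝ) - x ^ (r + 1) / ((r + 1)! : ℝ) := by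
    funext r; exact g2_succ r x
  rw [this]
  exact (summable_shift' x).sub (summable_shift x)

lemma tsum_g2 (x : ℝ) : ∑' r : ℕ, g2 r * x ^ r = 1 + x * rexp x - rexp x := by
  rw [Summable.tsum_eq_zero_add (summable_g2 x)]
  have h0 : g2 0 * x ^ 0 = 0 := by simp [g2]
  rw [h0, zero_add]
  have : (fun r : ℕ => g2 (r + 1) * x ^ (r + 1))
      = fun r : ℕ => x ^ (r + 1) / (r ! : ℝ) - x ^ (r + 1) / ((r + 1)! : ℝ) := by
    funext r; exact g2_succ r x
  rw [this, Summable.tsum_sub (summable_shift' x) (summable_shift x), tsum_shift', tsum_shift]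
  ring

section PSD

variable {n m : ℕ}

lemma sum_rotate {α β γ : Type*} [Fintype α] [Fintype β] [Fintype γ] (f : α → β → γ → ℝ) :
    ∑ a, ∑ b, ∑ c, f a b c = ∑ c, ∑ a, ∑ b, f a b c := by
  calc ∑ a, ∑ b, ∑ c, f a b c
      = ∑ a, ∑ c, ∑ b, f a b c :=
        Finset.sum_congr rfl (fun a _ => Finset.sum_comm)
    _ = ∑ c, ∑ a, ∑ b, f a b c := Finset.sum_comm

lemma psd_pow (q : Fin m → ℝ) (v : Fin m → EuclideanSpace ℝ (Fin n)) (r : ℕ) :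
    0 ≤ ∑ j, ∑ k, q j * q k * ⟪v j, v k⟫ ^ r := by
  have hip : ∀ j k : Fin m, (⟪v j, v k⟫ : ℝ) = ∑ d, v j d * v k d := fun j k => by
    simp [PiLp.inner_apply, RCLike.inner_apply, conj_trivial]; exact Finset.sum_congr rfl fun _ _ => mul_comm _ _
  have key : ∀ j k : Fin m, q j * q k * ⟪v j, v k⟫ ^ r
      = ∑ p : Fin r → Fin n, (q j * ∏ i, v j (p i)) * (q k * ∏ i, v k (p i)) := by
    intro j k
    rw [hip, Fintype.sum_pow, Finset.mul_sum]
    refine Finset.sum_congr rfl fun p _ => ?_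
    rw [Finset.prod_mul_distrib]
    ring
  simp_rw [key]
  rw [sum_rotate]
  refine Finset.sum_nonneg fun p _ => ?_
  have : ∑ j, ∑ k, (q j * ∏ i, v j (p i)) * (q k * ∏ i, v k (p i))
      = (∑ j, q j * ∏ i, v j (p i)) * (∑ k, q k * ∏ i, v k (p i)) :=
    (Finset.sum_mul_sum _ _ _ _).symm
  rw [this]
  exact mul_self_nonneg _

lemma psd_tsum (q : Fin m → ℝ) (v : Fin m → EuclideanSpace ℝ (Fin n)) (a : ℕ → ℝ)
    (ha : ∀ r, 0 ≤ a r) (hs : ∀ x : ℝ, Summable fun r => a r * x ^ r) :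
    0 ≤ ∑ j, ∑ k, q j * q k * ∑' r, a r * ⟪v j, v k⟫ ^ r := by
  have h1 : ∀ j k : Fin m, q j * q k * ∑' r, a r * ⟪v j, v k⟫ ^ r
      = ∑' r, q j * q k * (a r * ⟪v j, v k⟫ ^ r) := fun j k => (tsum_mul_left).symm
  simp_rw [h1]
  have h2 : ∀ j : Fin m, ∑ k, ∑' r, q j * q k * (a r * ⟪v j, v k⟫ ^ r)
      = ∑' r, ∑ k, q j * q k * (a r * ⟪v j, v k⟫ ^ r) := fun j =>
    (Summable.tsum_finsetSum (fun k _ => ((hs _).mul_left _))).symm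
  simp_rw [h2]
  have h3 : ∑ j, ∑' r, ∑ k, q j * q k * (a r * ⟪v j, v k⟫ ^ r)
      = ∑' r, ∑ j, ∑ k, q j * q k * (a r * ⟪v j, v k⟫ ^ r) :=
    (Summable.tsum_finsetSum (fun j _ => summable_sum (fun k _ => ((hs _).mul_left _)))).symm
  rw [h3]
  refine tsum_nonneg fun r => ?_
  have h4 : ∑ j, ∑ k, q j * q k * (a r * ⟪v j, v k⟫ ^ r)
      = a r * ∑ j, ∑ k, q j * q k * ⟪v j, v k⟫ ^ r := by
    rw [Finset.mul_sum]
    refine Finset.sum_congr rfl fun j _ => ?_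
    rw [Finset.mul_sum]
    exact Finset.sum_congr rfl fun k _ => by ring
  rw [h4]
  exact mul_nonneg (ha r) (psd_pow q v r)

lemma key1 (q : Fin m → ℝ) (v : Fin m → EuclideanSpace ℝ (Fin n)) :
    0 ≤ ∑ j, ∑ k, q j * q k * (rexp ⟪v j, v k⟫ - 1) := by
  have : ∀ j k : Fin m, rexp ⟪v j, v k⟫ - 1 = ∑' r, g1 r * ⟪v j, v k⟫ ^ r :=
    fun j k => (tsum_g1 _).symm
  simp_rw [this]
  exact psd_tsum q v g1 g1_nonneg summable_g1

lemma key2 (q : Fin m → ℝ) (v : Fin m → EuclideanSpace ℝ (Fin n)) :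
    0 ≤ ∑ j, ∑ k, q j * q k *
      (1 + ⟪v j, v k⟫ * rexp ⟪v j, v k⟫ - rexp ⟪v j, v k⟫) := by
  have : ∀ j k : Fin m, 1 + ⟪v j, v k⟫ * rexp ⟪v j, v k⟫ - rexp ⟪v j, v k⟫
      = ∑' r, g2 r * ⟪v j, v k⟫ ^ r := fun j k => (tsum_g2 _).symm
  simp_rw [this]
  exact psd_tsum q v g2 g2_nonneg summable_g2

end PSD

/-! ### Gaussian integrals -/

section Gauss

variable {n : ℕ}

noncomputable def dens (n : ℕ) : EuclideanSpace ℝ (Fin n) → ℝ :=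
  fun x => (2 * π) ^ (-(n : ℝ) / 2) * rexp (-‖x‖ ^ 2 / 2)

lemma dens_nonneg (x : EuclideanSpace ℝ (Fin n)) : 0 ≤ dens n x := by
  unfold dens; positivity

lemma dens_meas : Measurable (fun x : EuclideanSpace ℝ (Fin n) => Real.toNNReal (dens n x)) := by
  apply Measurable.real_toNNReal
  unfold dens
  fun_prop

lemma stdGaussian_eq :
    stdGaussian n = volume.withDensity (fun x => ((Real.toNNReal (dens n x) : NNReal) : ENNReal)) :=
  rfl

lemma integral_std (f : EuclideanSpace ℝ (Fin n) → ℝ) :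
    ∫ w, f w ∂(stdGaussian n) = ∫ w, dens n w * f w := by
  rw [stdGaussian_eq, integral_withDensity_eq_integral_smul dens_meas]
  congr 1 with w
  rw [NNReal.smul_def, Real.coe_toNNReal _ (dens_nonneg w), smul_eq_mul]

lemma integrable_std_iff (f : EuclideanSpace ℝ (Fin n) → ℝ) :
    Integrable f (stdGaussian n) ↔ Integrable (fun w => dens n w * f w) volume := by
  rw [stdGaussian_eq, integrable_withDensity_iff_integrable_smul dens_meas]
  constructor <;> intro hI <;> refine hI.congr (Filter.Eventually.of_forall fun w => ?_) <;>
    simp only [NNReal.smul_def, Real.coe_toNNReal _ (dens_nonneg w), smul_eq_mul]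

lemma integrable_volume (u : EuclideanSpace ℝ (Fin n)) :
    Integrable (fun w : EuclideanSpace ℝ (Fin n) => rexp (⟪u, w⟫ - ‖w‖ ^ 2 / 2)) volume := by
  have h := (GaussianFourier.integrable_cexp_neg_mul_sq_norm_add
    (V := EuclideanSpace ℝ (Fin n)) (b := (1/2 : ℂ)) (by norm_num) 1 u).norm
  refine h.congr (Filter.Eventually.of_forall fun w => ?_)
  simp only [Complex.norm_exp]
  congr 1
  simp [← Complex.ofReal_pow]
  ring

lemma integral_volume (u : EuclideanSpace ℝ (Fin n)) :
    ∫ w : EuclideanSpace ℝ (Fin n), rexp (⟪u, w⟫ - ‖w‖ ^ 2 / 2)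
      = rexp (‖u‖ ^ 2 / 2) * (2 * π) ^ ((n : ℝ) / 2) := by
  have h1 : ∀ w : EuclideanSpace ℝ (Fin n),
      rexp (⟪u, w⟫ - ‖w‖ ^ 2 / 2) = rexp (‖u‖ ^ 2 / 2) * rexp (-(1/2) * ‖w - u‖ ^ 2) := by
    intro w
    rw [← Real.exp_add]
    congr 1
    rw [norm_sub_sq_real, real_inner_comm w u]
    ring
  simp_rw [h1]
  rw [integral_const_mul]
  have h2 : ∫ w : EuclideanSpace ℝ (Fin n), rexp (-(1/2) * ‖w - u‖ ^ 2)
      = ∫ w : EuclideanSpace ℝ (Fin n), rexp (-(1/2) * ‖w‖ ^ 2) :=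
    integral_sub_right_eq_self (fun w => rexp (-(1/2) * ‖w‖ ^ 2)) u
  rw [h2]
  have h3 : ∫ w : EuclideanSpace ℝ (Fin n), rexp (-(1/2) * ‖w‖ ^ 2)
      = (π / (1/2)) ^ ((Module.finrank ℝ (EuclideanSpace ℝ (Fin n))) / 2 : ℝ) :=
    GaussianFourier.integral_rexp_neg_mul_sq_norm (by norm_num)
  rw [h3, finrank_euclideanSpace_fin, show π / (1/2 : ℝ) = 2 * π by ring]

lemma integral_exp_inner (u : EuclideanSpace ℝ (Fin n)) :
    ∫ w, rexp ⟪u, w⟫ ∂(stdGaussian n) = rexp (‖u‖ ^ 2 / 2) := by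
  rw [integral_std]
  have h1 : ∀ w : EuclideanSpace ℝ (Fin n),
      dens n w * rexp ⟪u, w⟫ = (2 * π) ^ (-(n : ℝ) / 2) * rexp (⟪u, w⟫ - ‖w‖ ^ 2 / 2) := by
    intro w
    unfold dens
    rw [mul_assoc, ← Real.exp_add]
    congr 2
    ring
  simp_rw [h1]
  rw [integral_const_mul, integral_volume]
  rw [show rexp (‖u‖ ^ 2 / 2) * (2 * π) ^ ((n : ℝ) / 2)
      = (2 * π) ^ ((n : ℝ) / 2) * rexp (‖u‖ ^ 2 / 2) by ring, ← mul_assoc,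
    ← Real.rpow_add (by positivity)]
  rw [show -(n : ℝ) / 2 + (n : ℝ) / 2 = 0 by ring, Real.rpow_zero, one_mul]

lemma integrable_exp_inner (u : EuclideanSpace ℝ (Fin n)) :
    Integrable (fun w => rexp ⟪u, w⟫) (stdGaussian n) := by
  rw [integrable_std_iff]
  refine ((integrable_volume u).const_mul ((2 * π) ^ (-(n : ℝ) / 2))).congr
    (Filter.Eventually.of_forall fun w => ?_)
  show (2 * π) ^ (-(n : ℝ) / 2) * rexp (⟪u, w⟫ - ‖w‖ ^ 2 / 2) = dens n w * rexp ⟪u, w⟫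
  unfold dens
  rw [mul_assoc, ← Real.exp_add]
  congr 2
  ring

lemma stochExp_eq (a : EuclideanSpace ℝ (Fin n)) (w : EuclideanSpace ℝ (Fin n)) :
    stochExp a w = rexp (-‖a‖ ^ 2 / 2) * rexp ⟪a, w⟫ := by
  rw [stochExp, ← Real.exp_add]
  congr 1
  ring

lemma integral_stochExp (a : EuclideanSpace ℝ (Fin n)) :
    ∫ w, stochExp a w ∂(stdGaussian n) = 1 := by
  simp_rw [stochExp_eq]
  rw [integral_const_mul, integral_exp_inner, ← Real.exp_add,
    show -‖a‖ ^ 2 / 2 + ‖a‖ ^ 2 / 2 = 0 by ring, Real.exp_zero]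

lemma integrable_stochExp (a : EuclideanSpace ℝ (Fin n)) :
    Integrable (stochExp a) (stdGaussian n) := by
  refine ((integrable_exp_inner a).const_mul (rexp (-‖a‖ ^ 2 / 2))).congr
    (Filter.Eventually.of_forall fun w => (stochExp_eq a w).symm)

lemma stochExp_mul (a b : EuclideanSpace ℝ (Fin n)) (w : EuclideanSpace ℝ (Fin n)) :
    stochExp a w * stochExp b w = rexp ⟪a, b⟫ * stochExp (a + b) w := by
  simp only [stochExp, ← Real.exp_add]
  congr 1
  rw [inner_add_left, norm_add_sq_real]
  ring

lemma integral_stochExp_mul (a b : EuclideanSpace ℝ (Fin n)) :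
    ∫ w, stochExp a w * stochExp b w ∂(stdGaussian n) = rexp ⟪a, b⟫ := by
  simp_rw [stochExp_mul]
  rw [integral_const_mul, integral_stochExp, mul_one]

lemma integrable_stochExp_mul (a b : EuclideanSpace ℝ (Fin n)) :
    Integrable (fun w => stochExp a w * stochExp b w) (stdGaussian n) :=
  (((integrable_stochExp (a + b)).const_mul (rexp ⟪a, b⟫)).congr
    (Filter.Eventually.of_forall fun w => (stochExp_mul a b w).symm))

lemma integral_stochExp_mul3 (a b d : EuclideanSpace ℝ (Fin n)) :
    ∫ w, stochExp a w * stochExp b w * stochExp d w ∂(stdGaussian n)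
      = rexp ⟪a, b⟫ * rexp ⟪a + b, d⟫ := by
  have h : ∀ w, stochExp a w * stochExp b w * stochExp d w
      = rexp ⟪a, b⟫ * (stochExp (a + b) w * stochExp d w) := by
    intro w; rw [stochExp_mul]; ring
  simp_rw [h]
  rw [integral_const_mul, integral_stochExp_mul]

lemma integrable_stochExp_mul3 (a b d : EuclideanSpace ℝ (Fin n)) :
    Integrable (fun w => stochExp a w * stochExp b w * stochExp d w) (stdGaussian n) := by
  refine ((integrable_stochExp_mul (a + b) d).const_mul (rexp ⟪a, b⟫)).congr
    (Filter.Eventually.of_forall fun w => ?_)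
  show rexp ⟪a, b⟫ * (stochExp (a + b) w * stochExp d w)
      = stochExp a w * stochExp b w * stochExp d w
  rw [stochExp_mul a b w]; ring

lemma integral_triple_sum {α β γ : Type*} [Fintype α] [Fintype β] [Fintype γ]
    {μ : Measure (EuclideanSpace ℝ (Fin n))} (f : α → β → γ → EuclideanSpace ℝ (Fin n) → ℝ)
    (hf : ∀ a b c, Integrable (f a b c) μ) :
    ∫ w, ∑ a, ∑ b, ∑ c, f a b c w ∂μ = ∑ a, ∑ b, ∑ c, ∫ w, f a b c w ∂μ := by
  rw [integral_finset_sum _ (fun a _ => integrable_finset_sum _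
    (fun b _ => integrable_finset_sum _ fun c _ => hf a b c))]
  refine Finset.sum_congr rfl fun a _ => ?_
  rw [integral_finset_sum _ (fun b _ => integrable_finset_sum _ fun c _ => hf a b c)]
  exact Finset.sum_congr rfl fun b _ => integral_finset_sum _ fun c _ => hf a b c

/-! ### Gradient -/

lemma hasFDeriv_stochExp (a : EuclideanSpace ℝ (Fin n)) (w : EuclideanSpace ℝ (Fin n)) :
    HasFDerivAt (stochExp a) (stochExp a w • (innerSL ℝ a)) w := by
  have h1 : HasFDerivAt (fun w : EuclideanSpace ℝ (Fin n) => (⟪a, w⟫ : ℝ) - ‖a‖ ^ 2 / 2)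
      (innerSL ℝ a) w := ((innerSL ℝ a).hasFDerivAt).sub_const _
  exact h1.exp

lemma toDual_symm_innerSL (v : EuclideanSpace ℝ (Fin n)) :
    (InnerProductSpace.toDual ℝ (EuclideanSpace ℝ (Fin n))).symm (innerSL ℝ v) = v := by
  have : InnerProductSpace.toDual ℝ (EuclideanSpace ℝ (Fin n)) v = innerSL ℝ v := by
    ext y; simp [InnerProductSpace.toDual_apply_apply]
  rw [← this, LinearIsometryEquiv.symm_apply_apply]

lemma gradient_sum_stochExp {m : ℕ} (lam : Fin m → ℝ) (h : Fin m → EuclideanSpace ℝ (Fin n))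
    (w : EuclideanSpace ℝ (Fin n)) :
    gradient (fun w => ∑ k, lam k * stochExp (h k) w) w
      = ∑ k, (lam k * stochExp (h k) w) • h k := by
  have hF : HasFDerivAt (fun w : EuclideanSpace ℝ (Fin n) => ∑ k, lam k * stochExp (h k) w)
      (∑ k, (lam k * stochExp (h k) w) • (innerSL ℝ (h k))) w := by
    refine HasFDerivAt.fun_sum fun k _ => ?_
    have := (hasFDeriv_stochExp (h k) w).const_mul (lam k)
    rw [← smul_smul]
    exact this
  have := (hasFDerivAt_iff_hasGradientAt.mp hF).gradient
  rw [this, map_sum]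
  refine Finset.sum_congr rfl fun k _ => ?_
  rw [_root_.map_smul, toDual_symm_innerSL]

lemma norm_sq_sum_smul {m : ℕ} (r : Fin m → ℝ) (v : Fin m → EuclideanSpace ℝ (Fin n)) :
    ‖∑ k, r k • v k‖ ^ 2 = ∑ j, ∑ k, r j * r k * ⟪v j, v k⟫ := by
  rw [← real_inner_self_eq_norm_sq, sum_inner]
  refine Finset.sum_congr rfl fun j _ => ?_
  rw [inner_sum]
  refine Finset.sum_congr rfl fun k _ => ?_
  rw [real_inner_smul_left, real_inner_smul_right]
  ring

end Gauss

end WickAux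

open WickAux

theorem wick_poincare_finite_rank (n N m : ℕ)
    (p : Fin N → ℝ) (c : Fin N → EuclideanSpace ℝ (Fin n))
    (hp : ∀ i, 0 ≤ p i) (hp1 : ∑ i, p i = 1)
    (h : Fin m → EuclideanSpace ℝ (Fin n)) (lam : Fin m → ℝ)
    (ν : EuclideanSpace ℝ (Fin n) → ℝ) (hν : ν = fun w => ∑ i, p i * stochExp (c i) w)
    (F : EuclideanSpace ℝ (Fin n) → ℝ) (hF : F = fun w => ∑ k, lam k * stochExp (h k) w)
    (WF : EuclideanSpace ℝ (Fin n) → ℝ)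
    (hWF : WF = fun w => ∑ j, ∑ k, lam j * lam k * stochExp (h j + h k) w) :
    (∫ w, WF w * ν w ∂(stdGaussian n)) ≤ ∫ w, F w ^ 2 * ν w ∂(stdGaussian n) ∧
      (∫ w, F w ^ 2 * ν w ∂(stdGaussian n)) ≤
        (∫ w, WF w * ν w ∂(stdGaussian n)) +
          ∫ w, ‖gradient F w‖ ^ 2 * ν w ∂(stdGaussian n) := by
  -- pointwise expansions
  have e1 : ∀ w, WF w * ν w = ∑ j, ∑ k, ∑ i,
      (lam j * lam k * p i) * (stochExp (h j + h k) w * stochExp (c i) w) := by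
    intro w
    rw [hWF, hν, Finset.sum_mul]
    refine Finset.sum_congr rfl fun j _ => ?_
    rw [Finset.sum_mul]
    refine Finset.sum_congr rfl fun k _ => ?_
    rw [Finset.mul_sum]
    exact Finset.sum_congr rfl fun i _ => by ring
  have e2 : ∀ w, F w ^ 2 * ν w = ∑ j, ∑ k, ∑ i,
      (lam j * lam k * p i) * (stochExp (h j) w * stochExp (h k) w * stochExp (c i) w) := by
    intro w
    rw [hF, hν, sq, Finset.sum_mul_sum, Finset.sum_mul]
    refine Finset.sum_congr rfl fun j _ => ?_
    rw [Finset.sum_mul]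
    refine Finset.sum_congr rfl fun k _ => ?_
    rw [Finset.mul_sum]
    exact Finset.sum_congr rfl fun i _ => by ring
  have e3 : ∀ w, ‖gradient F w‖ ^ 2 * ν w = ∑ j, ∑ k, ∑ i,
      (lam j * lam k * p i) * (⟪h j, h k⟫ *
        (stochExp (h j) w * stochExp (h k) w * stochExp (c i) w)) := by
    intro w
    rw [hF, hν, gradient_sum_stochExp lam h w, norm_sq_sum_smul, Finset.sum_mul]
    refine Finset.sum_congr rfl fun j _ => ?_
    rw [Finset.sum_mul]
    refine Finset.sum_congr rfl fun k _ => ?_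
    rw [Finset.mul_sum]
    exact Finset.sum_congr rfl fun i _ => by ring
  -- integral values
  have v1 : ∫ w, WF w * ν w ∂(stdGaussian n)
      = ∑ j, ∑ k, ∑ i, lam j * lam k * p i * rexp ⟪h j + h k, c i⟫ := by
    simp_rw [e1]
    rw [integral_triple_sum _ (fun j k i =>
      (integrable_stochExp_mul (h j + h k) (c i)).const_mul _)]
    refine Finset.sum_congr rfl fun j _ => Finset.sum_congr rfl fun k _ =>
      Finset.sum_congr rfl fun i _ => ?_
    rw [integral_const_mul, integral_stochExp_mul]
  have v2 : ∫ w, F w ^ 2 * ν w ∂(stdGaussian n)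
      = ∑ j, ∑ k, ∑ i, lam j * lam k * p i *
        (rexp ⟪h j, h k⟫ * rexp ⟪h j + h k, c i⟫) := by
    simp_rw [e2]
    rw [integral_triple_sum _ (fun j k i =>
      (integrable_stochExp_mul3 (h j) (h k) (c i)).const_mul _)]
    refine Finset.sum_congr rfl fun j _ => Finset.sum_congr rfl fun k _ =>
      Finset.sum_congr rfl fun i _ => ?_
    rw [integral_const_mul, integral_stochExp_mul3]
  have v3 : ∫ w, ‖gradient F w‖ ^ 2 * ν w ∂(stdGaussian n)
      = ∑ j, ∑ k, ∑ i, lam j * lam k * p i *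
        (⟪h j, h k⟫ * (rexp ⟪h j, h k⟫ * rexp ⟪h j + h k, c i⟫)) := by
    simp_rw [e3]
    rw [integral_triple_sum _ (fun j k i =>
      (((integrable_stochExp_mul3 (h j) (h k) (c i)).const_mul _).const_mul _))]
    refine Finset.sum_congr rfl fun j _ => Finset.sum_congr rfl fun k _ =>
      Finset.sum_congr rfl fun i _ => ?_
    rw [integral_const_mul, integral_const_mul, integral_stochExp_mul3]
  constructor
  · rw [v1, v2, ← sub_nonneg, ← Finset.sum_sub_distrib]
    simp_rw [← Finset.sum_sub_distrib]
    rw [sum_rotate (f := fun j k i => _ - _)]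
    refine Finset.sum_nonneg fun i _ => ?_
    have hq := key1 (fun j => lam j * rexp ⟪h j, c i⟫) h
    calc (0:ℝ) ≤ p i * ∑ j, ∑ k, (lam j * rexp ⟪h j, c i⟫) * (lam k * rexp ⟪h k, c i⟫) *
          (rexp ⟪h j, h k⟫ - 1) := mul_nonneg (hp i) hq
      _ = ∑ j, ∑ k, (lam j * lam k * p i * (rexp ⟪h j, h k⟫ * rexp ⟪h j + h k, c i⟫)
            - lam j * lam k * p i * rexp ⟪h j + h k, c i⟫) := by
          rw [Finset.mul_sum]
          refine Finset.sum_congr rfl fun j _ => ?_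
          rw [Finset.mul_sum]
          refine Finset.sum_congr rfl fun k _ => ?_
          rw [inner_add_left, Real.exp_add]
          ring
  · rw [v1, v2, v3, ← sub_nonneg]
    simp_rw [← Finset.sum_add_distrib, ← Finset.sum_sub_distrib]
    rw [sum_rotate (f := fun j k i => _ + _ - _)]
    refine Finset.sum_nonneg fun i _ => ?_
    have hq := key2 (fun j => lam j * rexp ⟪h j, c i⟫) h
    calc (0:ℝ) ≤ p i * ∑ j, ∑ k, (lam j * rexp ⟪h j, c i⟫) * (lam k * rexp ⟪h k, c i⟫) *
          (1 + ⟪h j, h k⟫ * rexp ⟪h j, h k⟫ - rexp ⟪h j, h k⟫) := mul_nonneg (hp i) hq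
      _ = ∑ j, ∑ k, (lam j * lam k * p i * rexp ⟪h j + h k, c i⟫
            + lam j * lam k * p i *
              (⟪h j, h k⟫ * (rexp ⟪h j, h k⟫ * rexp ⟪h j + h k, c i⟫))
            - lam j * lam k * p i * (rexp ⟪h j, h k⟫ * rexp ⟪h j + h k, c i⟫)) := by
          rw [Finset.mul_sum]
          refine Finset.sum_congr rfl fun j _ => ?_
          rw [Finset.mul_sum]
          refine Finset.sum_congr rfl fun k _ => ?_
          rw [inner_add_left, Real.exp_add]
          ring
end
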